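/- The normal words for the column braiding σ_C, i.e., words c1...ck in columns such that σ_C(c_j, c_{j+1}) = (c_j, c_{j+1}) for all j, are exactly the words of the form c1...cm e_C^α where c1 ≼_C c2 ≼_C ... ≼_C cm are non-empty columns in the column order (x1...xs ≼_C y1...yt iff s ≥ t and x_{i+s-t} ≤ y_i for all i ≤ t) and α ≥ 0. In particular they are in bijection with YT_A × ℕ, pairs of a Young tableau and a natural number. -/

import Mathlib

variable {α : Type*} [LinearOrder α]

/-- Schensted insertion of a letter into a single row:
returns the new row and the bumped letter, if any. -/
def rowInsert : List α → α → List α × Option α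
  | [], x => ([x], none)
  | y :: r, x =>
    if y ≤ x then
      let p := rowInsert r x
      (y :: p.1, p.2)
    else (x :: r, some y)

/-- Schensted insertion of a letter into a tableau, whose rows are listed
from bottom to top. -/
def tabInsert : List (List α) → α → List (List α)
  | [], x => [[x]]
  | r :: t, x =>
    match rowInsert r x with
    | (r', none) => r' :: t
    | (r', some y) => r' :: tabInsert t y

/-- Iterated Schensted insertion of a word. -/
def insertWord (t : List (List α)) (w : List α) : List (List α) :=
  w.foldl tabInsert t

/-- Row reading of a tableau: the rows, read from top to bottom. -/
def rowRead (t : List (List α)) : List α := t.reverse.flatten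

/-- The tableau associated to a word by the Schensted algorithm. -/
def toTableau (w : List α) : List (List α) := insertWord [] w

/-- The Schensted (plactic) product of two tableaux. -/
def tabProd (t t' : List (List α)) : List (List α) := insertWord t (rowRead t')

/-- The row order: `u ≻_R l` iff `u` is at most as long as `l` and dominates
it entrywise strictly. -/
def RowDom (u l : List α) : Prop :=
  u.length ≤ l.length ∧
    ∀ i (hu : i < u.length) (hl : i < l.length), l.get ⟨i, hl⟩ < u.get ⟨i, hu⟩

/-- A Young tableau: a bottom-to-top list of nonempty nondecreasing rows,
each row strictly dominating the one below it. -/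
def IsTableau (t : List (List α)) : Prop :=
  (∀ r ∈ t, r ≠ [] ∧ r.Pairwise (· ≤ ·)) ∧ List.Chain' (fun low up => RowDom up low) t

/-- A row: a nondecreasing word. -/
def IsRow (r : List α) : Prop := r.Pairwise (· ≤ ·)

/-- A column: a strictly decreasing word. -/
def IsCol (c : List α) : Prop := c.Pairwise (· > ·)

/-- Number of columns of a tableau: the length of its bottom row. -/
def cols (t : List (List α)) : ℕ := (t.headD []).length

/-- The one-column tableau associated to a column, read from top to bottom. -/
def colTab (c : List α) : List (List α) := c.reverse.map (fun x => [x])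

/-- The `j`-th column of a tableau, read from top to bottom. -/
def colOf (t : List (List α)) (j : ℕ) : List α := t.reverse.filterMap (fun r => r[j]?)

/-- The column braiding: `σ_C (c₁, c₂)` consists of the two columns of the
tableau `c₁ * c₂` (the second one being empty if `c₁ * c₂` is a single column,
in which case the first one is the concatenated column `c₁c₂`). -/
def sigmaC (c1 c2 : List α) : List α × List α :=
  (colOf (tabProd (colTab c1) (colTab c2)) 0, colOf (tabProd (colTab c1) (colTab c2)) 1)

/-- The (zero- or) one-row tableau associated to a row. -/
def rowTab (r : List α) : List (List α) := if r = [] then [] else [r]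

/-- The row braiding: `σ_R (r₁, r₂)` is the pair (top row, bottom row) of the
tableau `r₁ * r₂`, the top row being empty if `r₁ * r₂` is a single row
(which is then the concatenation `r₁r₂`). -/
def sigmaR (r1 r2 : List α) : List α × List α :=
  ((tabProd (rowTab r1) (rowTab r2)).getD 1 [], (tabProd (rowTab r1) (rowTab r2)).getD 0 [])

/-- The left map `σ × Id` of the Yang–Baxter equation. -/
def map12 {X : Type*} (f : X → X → X × X) : X × X × X → X × X × X :=
  fun p => ((f p.1 p.2.1).1, (f p.1 p.2.1).2, p.2.2)

/-- The right map `Id × σ` of the Yang–Baxter equation. -/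
def map23 {X : Type*} (f : X → X → X × X) : X × X × X → X × X × X :=
  fun p => (p.1, f p.2.1 p.2.2)


/-- The column order: `x ≼_C y` iff `x` is at least as long as `y` and
`x (i + |x| - |y|) ≤ y i` for all `i < |y|`. -/
def ColLe (x y : List α) : Prop :=
  y.length ≤ x.length ∧
    ∀ i (hy : i < y.length) (hx : i + x.length - y.length < x.length),
      x.get ⟨i + x.length - y.length, hx⟩ ≤ y.get ⟨i, hy⟩

section NormalAux
set_option linter.unusedSectionVars false

/-- Two-column tableau from bottom-to-top column lists. -/
def tcr : List α → List α → List (List α)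
  | [], _ => []
  | a :: l, [] => [a] :: tcr l []
  | a :: l, b :: m => [a, b] :: tcr l m

@[simp] lemma tcr_nil (er : List α) : tcr [] er = [] := by cases er <;> rfl

lemma tcr_nil_right : ∀ l : List α, tcr l [] = l.map (fun x => [x])
  | [] => rfl
  | a :: l => by rw [tcr, tcr_nil_right l, List.map]

lemma colTab_eq (c : List α) : colTab c = tcr c.reverse [] := by
  rw [tcr_nil_right, colTab]

lemma rowRead_colTab (c : List α) : rowRead (colTab c) = c := by
  simp [rowRead, colTab]
  induction c with
  | nil => rfl
  | cons a l ih => simp [ih]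

lemma filterMap_rev {β γ : Type*} (f : β → Option γ) :
    ∀ t : List β, t.reverse.filterMap f = (t.filterMap f).reverse := by
  intro t
  induction t with
  | nil => rfl
  | cons a l ih => cases h : f a <;> simp [List.filterMap_append, List.filterMap_cons, h, ih]

lemma filterMap_tcr0 : ∀ cr er : List α, er.length ≤ cr.length →
    (tcr cr er).filterMap (fun r => r[0]?) = cr
  | [], _, _ => by simp
  | a :: l, [], h => by
      rw [tcr]; simp [List.filterMap_cons, filterMap_tcr0 l [] (by simp)]
  | a :: l, b :: m, h => by
      rw [tcr]
      simp [List.filterMap_cons, filterMap_tcr0 l m (by simpa using h)]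

lemma filterMap_tcr1 : ∀ cr er : List α, er.length ≤ cr.length →
    (tcr cr er).filterMap (fun r => r[1]?) = er
  | [], er, h => by simp at h; simp [h]
  | a :: l, [], h => by
      rw [tcr]
      have : ∀ l' : List α, (l'.map (fun x => [x])).filterMap (fun r => r[1]?) = [] := by
        intro l'; induction l' with
        | nil => rfl
        | cons c t ih => simp [List.filterMap_cons, ih]
      simp [List.filterMap_cons, tcr_nil_right, this]
  | a :: l, b :: m, h => by
      rw [tcr]
      simp [List.filterMap_cons, filterMap_tcr1 l m (by simpa using h)]

lemma colOf_tcr0 (cr er : List α) (h : er.length ≤ cr.length) :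
    colOf (tcr cr er) 0 = cr.reverse := by
  rw [colOf, filterMap_rev, filterMap_tcr0 cr er h]

lemma colOf_tcr1 (cr er : List α) (h : er.length ≤ cr.length) :
    colOf (tcr cr er) 1 = er.reverse := by
  rw [colOf, filterMap_rev, filterMap_tcr1 cr er h]

end NormalAux
section NormalAux2
set_option linter.unusedSectionVars false

lemma rowInsert_nil (x : α) : rowInsert [] x = ([x], none) := rfl

lemma rowInsert_cons_le (y : α) (r : List α) (x : α) (h : y ≤ x) :
    rowInsert (y :: r) x = (y :: (rowInsert r x).1, (rowInsert r x).2) := by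
  simp [rowInsert, h]

lemma rowInsert_cons_gt (y : α) (r : List α) (x : α) (h : x < y) :
    rowInsert (y :: r) x = (x :: r, some y) := by
  simp [rowInsert, not_le.2 h]

lemma tabInsert_none (r : List α) (t : List (List α)) (x : α) (r' : List α)
    (h : rowInsert r x = (r', none)) : tabInsert (r :: t) x = r' :: t := by
  simp [tabInsert, h]

lemma tabInsert_some (r : List α) (t : List (List α)) (x : α) (r' : List α) (y : α)
    (h : rowInsert r x = (r', some y)) : tabInsert (r :: t) x = r' :: tabInsert t y := by
  simp [tabInsert, h]

lemma col0_insert : ∀ (l er : List α) (v : α), er.length ≤ l.length →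
    List.Chain' (· < ·) (v :: l) →
    tabInsert (tcr l er) v = tcr (v :: l) er
  | [], er, v, h, hc => by
      have he : er = [] := List.eq_nil_of_length_eq_zero (Nat.le_zero.1 (by simpa using h))
      subst he
      simp [tcr, tabInsert]
  | a :: l, [], v, h, hc => by
      obtain ⟨hva, hc'⟩ := List.isChain_cons_cons.1 hc
      rw [show tcr (a :: l) [] = [a] :: tcr l [] from rfl,
        tabInsert_some [a] _ v [v] a (by
          rw [rowInsert_cons_gt a [] v hva]),
        col0_insert l [] a (by simp) hc']
      rfl
  | a :: l, b :: m, v, h, hc => by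
      obtain ⟨hva, hc'⟩ := List.isChain_cons_cons.1 hc
      rw [show tcr (a :: l) (b :: m) = [a, b] :: tcr l m from rfl,
        tabInsert_some [a, b] _ v [v, b] a (by
          rw [rowInsert_cons_gt a [b] v hva]),
        col0_insert l m a (by simpa using h) hc']
      rfl

lemma ins_exact : ∀ (er cr : List α) (x : α),
    er.length < cr.length →
    List.Chain' (· < ·) (x :: er) →
    List.Forall₂ (· ≤ ·) (cr.take (er.length + 1)) (x :: er) →
    tabInsert (tcr cr er) x = tcr cr (x :: er)
  | [], cr, x, h, hc, hf => by
      obtain ⟨c0, cr', rfl⟩ : ∃ c0 cr', cr = c0 :: cr' := by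
        cases cr with
        | nil => simp at h
        | cons c0 cr' => exact ⟨c0, cr', rfl⟩
      have hle : c0 ≤ x := by
        simp [List.take] at hf
        exact hf
      rw [show tcr (c0 :: cr') [] = [c0] :: tcr cr' [] from rfl,
        tabInsert_none [c0] _ x [c0, x] (by
          rw [rowInsert_cons_le c0 [] x hle, rowInsert_nil])]
      rfl
  | e0 :: er', cr, x, h, hc, hf => by
      obtain ⟨c0, cr', rfl⟩ : ∃ c0 cr', cr = c0 :: cr' := by
        cases cr with
        | nil => simp at h
        | cons c0 cr' => exact ⟨c0, cr', rfl⟩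
      obtain ⟨hxe, hc'⟩ := List.isChain_cons_cons.1 hc
      rw [List.take_succ_cons] at hf
      obtain ⟨hle, hf'⟩ := List.forall₂_cons.1 hf
      rw [show tcr (c0 :: cr') (e0 :: er') = [c0, e0] :: tcr cr' er' from rfl,
        tabInsert_some [c0, e0] _ x [c0, x] e0 (by
          rw [rowInsert_cons_le c0 [e0] x hle, rowInsert_cons_gt e0 [] x hxe]),
        ins_exact er' cr' e0 (by simpa using h) hc' (by simpa using hf')]
      rfl

lemma word_exact : ∀ (w : List α) (cr er : List α),
    er.length + w.length ≤ cr.length →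
    List.Chain' (· < ·) (w.reverse ++ er) →
    (∀ p < w.length, List.Forall₂ (· ≤ ·) (cr.take (er.length + p + 1))
      ((w.take (p + 1)).reverse ++ er)) →
    insertWord (tcr cr er) w = tcr cr (w.reverse ++ er)
  | [], cr, er, h, hc, hf => by simp [insertWord]
  | x :: w', cr, er, h, hc, hf => by
      have hsuf : List.Chain' (· < ·) (x :: er) :=
        hc.suffix ⟨w'.reverse, by simp⟩
      have h0 := hf 0 (by simp)
      simp only [List.take, List.reverse_cons, List.singleton_append] at h0
      have hstep : tabInsert (tcr cr er) x = tcr cr (x :: er) :=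
        ins_exact er cr x (by simp at h; omega) hsuf (by simpa using h0)
      have hrest : insertWord (tcr cr (x :: er)) w' = tcr cr (w'.reverse ++ (x :: er)) := by
        apply word_exact w' cr (x :: er)
        · simp at h ⊢; omega
        · simpa using hc
        · intro p hp
          have := hf (p + 1) (by simpa using Nat.succ_lt_succ hp)
          simpa [Nat.add_assoc, Nat.add_comm, Nat.add_left_comm] using this
      calc insertWord (tcr cr er) (x :: w')
          = insertWord (tabInsert (tcr cr er) x) w' := rfl
        _ = tcr cr (w'.reverse ++ (x :: er)) := by rw [hstep, hrest]
        _ = tcr cr ((x :: w').reverse ++ er) := by simp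

lemma word_col0 : ∀ (w l : List α),
    List.Chain' (· < ·) (w.reverse ++ l) →
    insertWord (tcr l []) w = tcr (w.reverse ++ l) []
  | [], l, hc => by simp [insertWord]
  | x :: w', l, hc => by
      have hstep : tabInsert (tcr l []) x = tcr (x :: l) [] :=
        col0_insert l [] x (by simp) (hc.suffix ⟨w'.reverse, by simp⟩)
      have hrest : insertWord (tcr (x :: l) []) w' = tcr (w'.reverse ++ (x :: l)) [] :=
        word_col0 w' (x :: l) (by simpa using hc)
      calc insertWord (tcr l []) (x :: w')
          = insertWord (tabInsert (tcr l []) x) w' := rfl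
        _ = tcr (w'.reverse ++ (x :: l)) [] := by rw [hstep, hrest]
        _ = tcr ((x :: w').reverse ++ l) [] := by simp

end NormalAux2
section NormalAux3
set_option linter.unusedSectionVars false

lemma chain'_lt_all {x : α} {l : List α} (h : List.Chain' (· < ·) (x :: l)) :
    ∀ b ∈ l, x < b := by
  have := List.isChain_iff_pairwise.1 h
  exact fun b hb => (List.pairwise_cons.1 this).1 b hb

lemma chain'_cons_of_all {x : α} {l : List α} (h : List.Chain' (· < ·) l)
    (h2 : ∀ b ∈ l, x < b) : List.Chain' (· < ·) (x :: l) := by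
  rw [List.Chain', List.isChain_cons]
  exact ⟨fun y hy => h2 y (List.mem_of_mem_head? hy), h⟩

lemma chain'_gt_all {x : α} {l : List α} (h : List.Chain' (· > ·) (x :: l)) :
    ∀ b ∈ l, b < x := by
  have := List.isChain_iff_pairwise.1 h
  exact fun b hb => (List.pairwise_cons.1 this).1 b hb

lemma shift₂ : ∀ (er cr : List α) (x : α),
    List.Forall₂ (· ≤ ·) (cr.take er.length) er →
    List.Chain' (· < ·) er →
    (∀ b ∈ er, x < b) →
    List.Forall₂ (· ≤ ·) ((x :: cr).take er.length) er
  | [], cr, x, hf, hc, hb => by simp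
  | e0 :: er', cr, x, hf, hc, hb => by
      obtain ⟨c0, cr', rfl⟩ : ∃ c0 cr', cr = c0 :: cr' := by
        cases cr with
        | nil => simp at hf
        | cons c0 cr' => exact ⟨c0, cr', rfl⟩
      rw [List.length_cons, List.take_succ_cons] at hf ⊢
      obtain ⟨hle, hf'⟩ := List.forall₂_cons.1 hf
      refine List.forall₂_cons.2 ⟨le_of_lt (hb e0 (by simp)), ?_⟩
      exact shift₂ er' cr' c0 hf' hc.tail
        (fun b hb' => lt_of_le_of_lt hle (chain'_lt_all hc b hb'))

lemma ins_main : ∀ (cr er : List α) (x : α),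
    er.length ≤ cr.length →
    List.Chain' (· < ·) cr →
    List.Chain' (· < ·) er →
    List.Forall₂ (· ≤ ·) (cr.take er.length) er →
    (∀ b ∈ er, x < b) →
    ∃ cr' er', tabInsert (tcr cr er) x = tcr cr' er' ∧
      er'.length ≤ cr'.length ∧
      List.Chain' (· < ·) cr' ∧
      List.Chain' (· < ·) er' ∧
      List.Forall₂ (· ≤ ·) (cr'.take er'.length) er' ∧
      (∀ b ∈ er', x ≤ b) ∧
      (∀ b ∈ cr', b ∈ cr ∨ x ≤ b)
  | [], er, x, h1, h2, h3, h4, h5 => by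
      have he : er = [] := List.eq_nil_of_length_eq_zero (Nat.le_zero.1 (by simpa using h1))
      subst he
      exact ⟨[x], [], by simp [tcr, tabInsert], by simp, by simp [List.Chain'], by simp [List.Chain'], by simp, by simp,
        by simp⟩
  | c0 :: cr', er, x, h1, h2, h3, h4, h5 => by
      by_cases hx : x < c0
      · refine ⟨x :: c0 :: cr', er, col0_insert _ _ _ h1 (chain'_cons_of_all h2 ?_), ?_, ?_, h3,
          ?_, fun b hb => le_of_lt (h5 b hb), ?_⟩
        · intro b hb
          rcases List.mem_cons.1 hb with rfl | hb
          · exact hx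
          · exact lt_trans hx (chain'_lt_all h2 b hb)
        · simp at h1 ⊢; omega
        · exact chain'_cons_of_all h2 (fun b hb => by
            rcases List.mem_cons.1 hb with rfl | hb
            · exact hx
            · exact lt_trans hx (chain'_lt_all h2 b hb))
        · exact shift₂ er (c0 :: cr') x h4 h3 h5
        · intro b hb
          rcases List.mem_cons.1 hb with rfl | hb
          · exact Or.inr le_rfl
          · exact Or.inl hb
      · push_neg at hx
        cases er with
        | nil =>
          refine ⟨c0 :: cr', [x], ?_, by simpa using h1, h2, by simp [List.Chain'], ?_, by simp, fun b hb => Or.inl hb⟩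
          · rw [show tcr (c0 :: cr') [] = [c0] :: tcr cr' [] from rfl,
              tabInsert_none [c0] _ x [c0, x] (by
                rw [rowInsert_cons_le c0 [] x hx, rowInsert_nil])]
            rfl
          · simpa using hx
        | cons e0 er₂ =>
          have hxe : x < e0 := h5 e0 (by simp)
          rw [List.length_cons, List.take_succ_cons] at h4
          obtain ⟨hce, h4'⟩ := List.forall₂_cons.1 h4
          obtain ⟨cr₂, er₃, heq, k1, k2, k3, k4, k5, k6⟩ :=
            ins_main cr' er₂ e0 (by simpa using h1) h2.tail h3.tail h4'
              (fun b hb => chain'_lt_all h3 b hb)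
          refine ⟨c0 :: cr₂, x :: er₃, ?_, by simpa using k1, ?_, ?_, ?_, ?_, ?_⟩
          · rw [show tcr (c0 :: cr') (e0 :: er₂) = [c0, e0] :: tcr cr' er₂ from rfl,
              tabInsert_some [c0, e0] _ x [c0, x] e0 (by
                rw [rowInsert_cons_le c0 [e0] x hx, rowInsert_cons_gt e0 [] x hxe]),
              heq]
            rfl
          · refine chain'_cons_of_all k2 (fun b hb => ?_)
            rcases k6 b hb with hb' | hb'
            · exact chain'_lt_all h2 b hb'
            · exact lt_of_le_of_lt hx (lt_of_lt_of_le hxe hb')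
          · exact chain'_cons_of_all k3 (fun b hb => lt_of_lt_of_le hxe (k5 b hb))
          · rw [List.length_cons, List.take_succ_cons]
            exact List.forall₂_cons.2 ⟨hx, k4⟩
          · intro b hb
            rcases List.mem_cons.1 hb with rfl | hb
            · exact le_rfl
            · exact le_of_lt (lt_of_lt_of_le hxe (k5 b hb))
          · intro b hb
            rcases List.mem_cons.1 hb with rfl | hb
            · exact Or.inl (by simp)
            · rcases k6 b hb with hb' | hb'
              · exact Or.inl (List.mem_cons_of_mem _ hb')
              · exact Or.inr (le_of_lt (lt_of_lt_of_le hxe hb'))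

lemma word_main : ∀ (w : List α) (cr er : List α),
    er.length ≤ cr.length →
    List.Chain' (· < ·) cr →
    List.Chain' (· < ·) er →
    List.Forall₂ (· ≤ ·) (cr.take er.length) er →
    List.Chain' (· > ·) w →
    (∀ x ∈ w, ∀ b ∈ er, x < b) →
    ∃ cr' er', insertWord (tcr cr er) w = tcr cr' er' ∧
      er'.length ≤ cr'.length ∧
      List.Forall₂ (· ≤ ·) (cr'.take er'.length) er'
  | [], cr, er, h1, h2, h3, h4, hw, hb => ⟨cr, er, by simp [insertWord], h1, h4⟩
  | x :: w', cr, er, h1, h2, h3, h4, hw, hb => by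
      obtain ⟨cr₁, er₁, heq, k1, k2, k3, k4, k5, _⟩ :=
        ins_main cr er x h1 h2 h3 h4 (fun b hbm => hb x (by simp) b hbm)
      obtain ⟨cr', er', heq', m1, m2⟩ :=
        word_main w' cr₁ er₁ k1 k2 k3 k4 hw.tail
          (fun y hy b hbm => lt_of_lt_of_le (chain'_gt_all hw y hy) (k5 b hbm))
      exact ⟨cr', er', by rw [show insertWord (tcr cr er) (x :: w') =
        insertWord (tabInsert (tcr cr er) x) w' from rfl, heq, heq'], m1, m2⟩

end NormalAux3
section NormalAux4
set_option linter.unusedSectionVars false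

lemma isCol_rev_chain {c : List α} (hc : IsCol c) : List.Chain' (· < ·) c.reverse :=
  List.isChain_iff_pairwise.2 (List.pairwise_reverse.2 hc)

lemma isCol_chain {c : List α} (hc : IsCol c) : List.Chain' (· > ·) c :=
  List.isChain_iff_pairwise.2 hc

lemma isCol_get_le {c : List α} (hc : IsCol c) {j k : ℕ} (hjk : j ≤ k) (hk : k < c.length) :
    c.get ⟨k, hk⟩ ≤ c.get ⟨j, lt_of_le_of_lt hjk hk⟩ := by
  rcases eq_or_lt_of_le hjk with rfl | h
  · exact le_rfl
  · exact le_of_lt (hc.rel_get_of_lt (by exact h))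

lemma sigmaC_eq (c d : List α) :
    sigmaC c d = (colOf (insertWord (tcr c.reverse []) d) 0,
      colOf (insertWord (tcr c.reverse []) d) 1) := by
  rw [sigmaC, tabProd, rowRead_colTab, colTab_eq]

lemma sigmaC_right_empty (c : List α) : sigmaC c [] = (c, []) := by
  rw [sigmaC_eq]
  have h0 : ([] : List α).length ≤ c.reverse.length := by simp
  rw [show insertWord (tcr c.reverse []) [] = tcr c.reverse [] from rfl,
    colOf_tcr0 _ _ h0, colOf_tcr1 _ _ h0]
  simp

lemma sigmaC_left_empty {d : List α} (hd : IsCol d) : sigmaC [] d = (d, []) := by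
  rw [sigmaC_eq]
  have hw : insertWord (tcr ([] : List α).reverse []) d = tcr (d.reverse ++ []) [] := by
    rw [show ([] : List α).reverse = [] from rfl]
    exact word_col0 d [] (by simpa using isCol_rev_chain hd)
  rw [hw, colOf_tcr0 _ _ (by simp), colOf_tcr1 _ _ (by simp)]
  simp

lemma forall₂_of_colle {c d : List α} (hc : IsCol c) (h : ColLe c d) :
    ∀ p < d.length, List.Forall₂ (· ≤ ·) (c.reverse.take (p + 1)) ((d.take (p + 1)).reverse) := by
  intro p hp
  obtain ⟨hlen, hcd⟩ := h
  rw [List.forall₂_iff_get]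
  constructor
  · simp; omega
  · intro i h₁ h₂
    have hi : i ≤ p := by simp at h₁; omega
    have e1 : (c.reverse.take (p + 1)).get ⟨i, h₁⟩
        = c.get ⟨c.length - 1 - i, by omega⟩ := by
      simp [List.get_eq_getElem, List.getElem_take, List.getElem_reverse]
    have e2 : ((d.take (p + 1)).reverse).get ⟨i, h₂⟩
        = d.get ⟨p - i, by omega⟩ := by
      simp [List.get_eq_getElem, List.getElem_reverse, List.getElem_take,
        List.length_take]
      congr 1
      omega
    rw [e1, e2]
    have key := hcd (p - i) (by omega) (by omega)
    exact le_trans (isCol_get_le hc (by omega) (by omega)) key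

lemma fixed_of_colle {c d : List α} (hc : IsCol c) (hd : IsCol d) (h : ColLe c d) :
    sigmaC c d = (c, d) := by
  rw [sigmaC_eq]
  have hlen : d.length ≤ c.length := h.1
  have hw : insertWord (tcr c.reverse []) d = tcr c.reverse (d.reverse ++ []) := by
    apply word_exact d c.reverse []
    · simp; omega
    · simpa using isCol_rev_chain hd
    · intro p hp
      simpa using forall₂_of_colle hc h p hp
  rw [hw]
  have h1 : (d.reverse ++ []).length ≤ c.reverse.length := by simp; omega
  rw [colOf_tcr0 _ _ h1, colOf_tcr1 _ _ h1]
  simp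

lemma colle_of_fixed {c d : List α} (hc : IsCol c) (hd : IsCol d)
    (h : sigmaC c d = (c, d)) : ColLe c d := by
  obtain ⟨CR, ER, heq, h1, h4⟩ :=
    word_main d c.reverse [] (by simp) (isCol_rev_chain hc) (by simp [List.Chain']) (by simp)
      (isCol_chain hd) (by simp)
  rw [sigmaC_eq, heq, colOf_tcr0 _ _ h1, colOf_tcr1 _ _ h1, Prod.mk.injEq] at h
  obtain ⟨hCR, hER⟩ := h
  have hCR' : CR = c.reverse := by rw [← hCR, List.reverse_reverse]
  have hER' : ER = d.reverse := by rw [← hER, List.reverse_reverse]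
  subst hCR' hER'
  refine ⟨by simpa using h1, ?_⟩
  intro i hy hx
  rw [List.forall₂_iff_get] at h4
  obtain ⟨hl, hget⟩ := h4
  have hts : d.length ≤ c.length := by simpa using h1
  have hj : d.length - 1 - i < (c.reverse.take d.reverse.length).length := by
    simp; omega
  have := hget (d.length - 1 - i) hj (by simp; omega)
  have e1 : (c.reverse.take d.reverse.length).get ⟨d.length - 1 - i, hj⟩
      = c.get ⟨i + c.length - d.length, hx⟩ := by
    simp [List.get_eq_getElem, List.getElem_take, List.getElem_reverse]
    congr 1
    omega
  have e2 : (d.reverse).get ⟨d.length - 1 - i, by simp; omega⟩ = d.get ⟨i, hy⟩ := by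
    simp [List.get_eq_getElem, List.getElem_reverse]
    congr 1
    omega
  rw [e1, e2] at this
  exact this

end NormalAux4
section NormalAux5
set_option linter.unusedSectionVars false

lemma chain'_replicate_nil (a : ℕ) :
    List.Chain' (fun c d => sigmaC c d = (c, d)) (List.replicate a ([] : List α)) := by
  induction a with
  | zero => simp [List.Chain']
  | succ n ih =>
    rw [List.replicate_succ, List.Chain', List.isChain_cons]
    refine ⟨fun y hy => ?_, ih⟩
    have hy' : y = [] := List.eq_of_mem_replicate (List.mem_of_mem_head? hy)
    subst hy'
    exact sigmaC_right_empty []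

lemma chain_fix_of_colle : ∀ cs : List (List α), (∀ c ∈ cs, IsCol c ∧ c ≠ []) →
    List.Chain' ColLe cs → List.Chain' (fun c d => sigmaC c d = (c, d)) cs
  | [], _, _ => by simp [List.Chain']
  | [c], _, _ => by simp [List.Chain']
  | c :: d :: t, hmem, hch => by
      rw [List.Chain', List.isChain_cons_cons] at hch ⊢
      exact ⟨fixed_of_colle (hmem c (by simp)).1 (hmem d (by simp)).1 hch.1,
        chain_fix_of_colle (d :: t) (fun x hx => hmem x (List.mem_cons_of_mem _ hx)) hch.2⟩

lemma nil_chain : ∀ w : List (List α), (∀ c ∈ w, IsCol c) →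
    List.Chain' (fun c d => sigmaC c d = (c, d)) (([] : List α) :: w) →
    ([] : List α) :: w = List.replicate (w.length + 1) []
  | [], _, _ => by simp
  | d :: w', hcol, hch => by
      rw [List.Chain', List.isChain_cons_cons] at hch
      have hd : d = [] := by
        have h1 := (sigmaC_left_empty (hcol d (by simp))).symm.trans hch.1
        exact (Prod.ext_iff.1 h1).1
      subst hd
      have hrec := nil_chain w' (fun c hc => hcol c (by simp [hc])) hch.2
      rw [List.length_cons, List.replicate_succ]
      exact congrArg (List.cons []) hrec

lemma decomp : ∀ w : List (List α), (∀ c ∈ w, IsCol c) →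
    List.Chain' (fun c d => sigmaC c d = (c, d)) w →
    ∃ (cs : List (List α)) (a : ℕ), (∀ c ∈ cs, IsCol c ∧ c ≠ []) ∧ List.Chain' ColLe cs ∧
      w = cs ++ List.replicate a ([] : List α)
  | [], _, _ => ⟨[], 0, by simp, by simp [List.Chain'], by simp⟩
  | c :: w', hcol, hch => by
      by_cases hc : c = []
      · subst hc
        refine ⟨[], w'.length + 1, by simp, by simp [List.Chain'], ?_⟩
        simpa using nil_chain w' (fun x hx => hcol x (by simp [hx])) hch
      · obtain ⟨cs', a', hmem, hcs, heq⟩ :=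
          decomp w' (fun x hx => hcol x (by simp [hx])) hch.tail
        refine ⟨c :: cs', a', ?_, ?_, by simp [heq]⟩
        · intro x hx
          rcases List.mem_cons.1 hx with rfl | hx
          · exact ⟨hcol x (by simp), hc⟩
          · exact hmem x hx
        · cases cs' with
          | nil => simp [List.Chain']
          | cons c' cs'' =>
            rw [List.Chain', List.isChain_cons_cons]
            refine ⟨?_, hcs⟩
            have hrel : sigmaC c c' = (c, c') := by
              have hw' : w' = c' :: (cs'' ++ List.replicate a' []) := by simpa using heq
              rw [hw'] at hch
              exact (List.isChain_cons_cons.1 hch).1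
            exact colle_of_fixed (hcol c (by simp)) (hmem c' (by simp)).1 hrel

end NormalAux5

/-- A word in columns is normal for the column braiding `σ_C` if and only if it
consists of a `≼_C`-nondecreasing sequence of non-empty columns (i.e., a Young
tableau) followed by some number of empty columns; so normal words correspond
to pairs of a Young tableau and a natural number. -/
theorem normal_words_sigmaC (w : List (List α)) :
    ((∀ c ∈ w, IsCol c) ∧ w.Chain' (fun c d => sigmaC c d = (c, d))) ↔
      ∃ (cs : List (List α)) (a : ℕ),
        (∀ c ∈ cs, IsCol c ∧ c ≠ []) ∧ cs.Chain' ColLe ∧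
          w = cs ++ List.replicate a ([] : List α) := by
  constructor
  · rintro ⟨hcol, hch⟩
    exact decomp w hcol hch
  · rintro ⟨cs, a, hmem, hch, rfl⟩
    constructor
    · intro c hcmem
      rcases List.mem_append.1 hcmem with h | h
      · exact (hmem c h).1
      · rw [List.eq_of_mem_replicate h]
        exact List.Pairwise.nil
    · rw [List.Chain', List.isChain_append]
      refine ⟨chain_fix_of_colle cs hmem hch, chain'_replicate_nil a, ?_⟩
      intro x hx y hy
      have hy' : y = [] := List.eq_of_mem_replicate (List.mem_of_mem_head? hy)
      subst hy'
      exact sigmaC_right_empty x
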